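/- Let P be a strictly positive probability on X^Λ with one-point conditional distributions Q_t^z, Λ = {t₁,...,tₙ}. Suppose each Q_t^z has Gibbs form Q_t^z(x) = exp(−H_t^z(x))/Σ_α exp(−H_t^z(α)) where H_t^z(x) = H_Λ(xz) − H_{Λ\{t}}(z) for some functions H_Λ : X^Λ → ℝ and H_{Λ\{t}} : X^{Λ\{t}} → ℝ. Then the telescoping identity Σ_{j=1}^n (H_{t_j}^{(αx)_j}(x_j) − H_{t_j}^{(αx)_j}(α_j)) = H_Λ(x) − H_Λ(α) holds for all x, α ∈ X^Λ, and consequently P(x) = exp(−H_Λ(x)) / Σ_{α∈X^Λ} exp(−H_Λ(α)). -/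
import Mathlib


def cat {Λ X : Type*} [DecidableEq Λ] (t : Λ) (x : X) (z : {s : Λ // s ≠ t} → X) : Λ → X :=
  fun s => if h : s = t then x else z ⟨s, h⟩

def catT {Λ X : Type*} [DecidableEq Λ] (t s : Λ) (y : X) (z : {r : Λ // r ≠ t ∧ r ≠ s} → X) :
    {r : Λ // r ≠ t} → X :=
  fun r => if h : r.1 = s then y else z ⟨r.1, r.2, h⟩

def catS {Λ X : Type*} [DecidableEq Λ] (t s : Λ) (x : X) (z : {r : Λ // r ≠ t ∧ r ≠ s} → X) :
    {r : Λ // r ≠ s} → X :=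
  fun r => if h : r.1 = t then x else z ⟨r.1, h, r.2⟩

def mix {n : ℕ} {X : Type*} (j : Fin n) (x u : Fin n → X) : {i : Fin n // i ≠ j} → X :=
  fun i => if i.1 < j then x i.1 else u i.1

theorem stmt14 {n : ℕ} {X : Type*} [Fintype X] [Nonempty X]
    (P : (Fin n → X) → ℝ) (hpos : ∀ σ, 0 < P σ) (hsum : ∑ σ, P σ = 1)
    (Q : ∀ j : Fin n, ({i : Fin n // i ≠ j} → X) → X → ℝ)
    (hQ : ∀ j z x, Q j z x = P (cat j x z) / ∑ v : X, P (cat j v z))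
    (HΛ : (Fin n → X) → ℝ)
    (Hrest : ∀ j : Fin n, ({i : Fin n // i ≠ j} → X) → ℝ)
    (H : ∀ j : Fin n, ({i : Fin n // i ≠ j} → X) → X → ℝ)
    (hH : ∀ j z x, H j z x = HΛ (cat j x z) - Hrest j z)
    (hGibbs : ∀ j z x, Q j z x = Real.exp (-(H j z x)) / ∑ α : X, Real.exp (-(H j z α))) :
    (∀ x α : Fin n → X,
      (∑ j : Fin n, (H j (mix j α x) (x j) - H j (mix j α x) (α j))) = HΛ x - HΛ α) ∧
    (∀ x : Fin n → X,
      P x = Real.exp (-(HΛ x)) / ∑ α : Fin n → X, Real.exp (-(HΛ α))) := by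
  -- positivity of normalizers
  have hS : ∀ (j : Fin n) (z : {i : Fin n // i ≠ j} → X), 0 < ∑ v : X, P (cat j v z) :=
    fun j z => Finset.sum_pos (fun v _ => hpos _) Finset.univ_nonempty
  have hE : ∀ (j : Fin n) (z : {i : Fin n // i ≠ j} → X),
      0 < ∑ α : X, Real.exp (-(H j z α)) :=
    fun j z => Finset.sum_pos (fun v _ => Real.exp_pos _) Finset.univ_nonempty
  -- explicit formula for P on a single-site change
  have hPf : ∀ (j : Fin n) (z : {i : Fin n // i ≠ j} → X) (x : X),
      P (cat j x z) * (∑ α : X, Real.exp (-(H j z α)))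
        = Real.exp (-(H j z x)) * (∑ v : X, P (cat j v z)) := by
    intro j z x
    have h1 := (hQ j z x).symm.trans (hGibbs j z x)
    rw [div_eq_div_iff (ne_of_gt (hS j z)) (ne_of_gt (hE j z))] at h1
    exact h1
  have ratio : ∀ (j : Fin n) (z : {i : Fin n // i ≠ j} → X) (x y : X),
      P (cat j x z) * Real.exp (-(H j z y)) = P (cat j y z) * Real.exp (-(H j z x)) := by
    intro j z x y
    have h1 := hPf j z x
    have h2 := hPf j z y
    have hEne := ne_of_gt (hE j z)
    apply mul_right_cancel₀ hEne
    calc P (cat j x z) * Real.exp (-(H j z y)) * (∑ α : X, Real.exp (-(H j z α)))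
        = (P (cat j x z) * (∑ α : X, Real.exp (-(H j z α)))) * Real.exp (-(H j z y)) := by ring
      _ = (Real.exp (-(H j z x)) * (∑ v : X, P (cat j v z))) * Real.exp (-(H j z y)) := by rw [h1]
      _ = (P (cat j y z) * (∑ α : X, Real.exp (-(H j z α)))) * Real.exp (-(H j z x)) := by
            rw [h2]; ring
      _ = P (cat j y z) * Real.exp (-(H j z x)) * (∑ α : X, Real.exp (-(H j z α))) := by ring
  -- the chain configurations
  have main : ∀ x α : Fin n → X,
      (∀ j : Fin n, cat j (x j) (mix j α x) = fun (i : Fin n) => if (i : ℕ) < (j : ℕ) then α i else x i)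
      ∧ (∀ j : Fin n, cat j (α j) (mix j α x)
          = fun (i : Fin n) => if (i : ℕ) < (j : ℕ) + 1 then α i else x i) := by
    intro x α
    constructor
    · intro j
      funext s
      by_cases h : s = j
      · subst h; simp [cat]
      · have h' : (s : ℕ) ≠ (j : ℕ) := fun hc => h (Fin.ext hc)
        simp only [cat, dif_neg h, mix, Fin.lt_def]
    · intro j
      funext s
      by_cases h : s = j
      · subst h; simp [cat]
      · have h' : (s : ℕ) ≠ (j : ℕ) := fun hc => h (Fin.ext hc)
        simp only [cat, dif_neg h, mix, Fin.lt_def]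
        rcases lt_trichotomy (s : ℕ) (j : ℕ) with hlt | heq | hgt
        · rw [if_pos hlt, if_pos (Nat.lt_succ_of_lt hlt)]
        · exact absurd heq h'
        · rw [if_neg (not_lt.2 (le_of_lt hgt)), if_neg (not_lt.2 hgt)]
  constructor
  · intro x α
    set g : ℕ → (Fin n → X) := fun k i => if (i : ℕ) < k then α i else x i with hg
    have hterm : ∀ j : Fin n,
        H j (mix j α x) (x j) - H j (mix j α x) (α j)
          = HΛ (g (j : ℕ)) - HΛ (g ((j : ℕ) + 1)) := by
      intro j
      rw [hH, hH, (main x α).1 j, (main x α).2 j]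
      ring
    rw [Finset.sum_congr rfl (fun j _ => hterm j)]
    rw [Fin.sum_univ_eq_sum_range (fun k => HΛ (g k) - HΛ (g (k + 1))) n]
    rw [Finset.sum_range_sub' (fun k => HΛ (g k)) n]
    have h0 : g 0 = x := by funext i; simp [hg]
    have hn : g n = α := by funext i; simp [hg, i.isLt]
    rw [h0, hn]
  · intro x
    -- key: P x * exp (-(HΛ α)) = P α * exp (-(HΛ x)) for all α
    have key : ∀ α : Fin n → X,
        P x * Real.exp (-(HΛ α)) = P α * Real.exp (-(HΛ x)) := by
      intro α
      set g : ℕ → (Fin n → X) := fun k i => if (i : ℕ) < k then α i else x i with hg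
      have h0 : g 0 = x := by funext i; simp [hg]
      have hn : g n = α := by funext i; simp [hg, i.isLt]
      have claim : ∀ k, k ≤ n →
          P x * Real.exp (-(HΛ (g k))) = P (g k) * Real.exp (-(HΛ x)) := by
        intro k
        induction k with
        | zero => intro _; rw [h0]
        | succ k ih =>
          intro hk1
          have hk : k < n := lt_of_lt_of_le (Nat.lt_succ_self k) hk1
          have ihk := ih (le_of_lt hk)
          set j : Fin n := ⟨k, hk⟩ with hj
          have hstep : P (g k) * Real.exp (-(HΛ (g (k + 1))))
              = P (g (k + 1)) * Real.exp (-(HΛ (g k))) := by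
            have h := ratio j (mix j α x) (x j) (α j)
            rw [hH, hH, (main x α).1 j, (main x α).2 j] at h
            have e1 : -(HΛ (g (k+1)) - Hrest j (mix j α x))
                = -HΛ (g (k+1)) + Hrest j (mix j α x) := by ring
            have e2 : -(HΛ (g k) - Hrest j (mix j α x))
                = -HΛ (g k) + Hrest j (mix j α x) := by ring
            have hj1 : ((j : ℕ)) = k := rfl
            have hcx : (fun (i : Fin n) => if (i : ℕ) < (j : ℕ) then α i else x i) = g k := rfl
            have hca : (fun (i : Fin n) => if (i : ℕ) < (j : ℕ) + 1 then α i else x i) = g (k + 1) := rfl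
            rw [hcx, hca, e1, e2, Real.exp_add, Real.exp_add] at h
            have hR := Real.exp_pos (Hrest j (mix j α x))
            have h' : (P (g k) * Real.exp (-(HΛ (g (k+1))))) * Real.exp (Hrest j (mix j α x))
                = (P (g (k+1)) * Real.exp (-(HΛ (g k)))) * Real.exp (Hrest j (mix j α x)) := by
              linear_combination h
            exact mul_right_cancel₀ (ne_of_gt hR) h'
          -- combine ih with step
          have hek := Real.exp_pos (-(HΛ (g k)))
          apply mul_right_cancel₀ (ne_of_gt hek)
          calc P x * Real.exp (-(HΛ (g (k+1)))) * Real.exp (-(HΛ (g k)))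
              = (P x * Real.exp (-(HΛ (g k)))) * Real.exp (-(HΛ (g (k+1)))) := by ring
            _ = (P (g k) * Real.exp (-(HΛ x))) * Real.exp (-(HΛ (g (k+1)))) := by rw [ihk]
            _ = (P (g k) * Real.exp (-(HΛ (g (k+1))))) * Real.exp (-(HΛ x)) := by ring
            _ = (P (g (k+1)) * Real.exp (-(HΛ (g k)))) * Real.exp (-(HΛ x)) := by rw [hstep]
            _ = P (g (k+1)) * Real.exp (-(HΛ x)) * Real.exp (-(HΛ (g k))) := by ring
      have := claim n (le_refl n)
      rw [hn] at this
      exact this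
    have hsumkey : P x * (∑ α : Fin n → X, Real.exp (-(HΛ α)))
        = Real.exp (-(HΛ x)) := by
      calc P x * (∑ α : Fin n → X, Real.exp (-(HΛ α)))
          = ∑ α : Fin n → X, P x * Real.exp (-(HΛ α)) := by rw [Finset.mul_sum]
        _ = ∑ α : Fin n → X, P α * Real.exp (-(HΛ x)) := Finset.sum_congr rfl (fun α _ => key α)
        _ = (∑ α : Fin n → X, P α) * Real.exp (-(HΛ x)) := by rw [Finset.sum_mul]
        _ = Real.exp (-(HΛ x)) := by rw [hsum, one_mul]
    have hZ : (0 : ℝ) < ∑ α : Fin n → X, Real.exp (-(HΛ α)) :=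
      Finset.sum_pos (fun v _ => Real.exp_pos _) Finset.univ_nonempty
    field_simp
    linarith [hsumkey]
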